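/- arXiv:2007.07219 — 5 statements merged into one kernel-verified Lean document; each statement's English description precedes it below -/
import Mathlib

section
/- If μ is a vector of n positive reals summing to n with minimum value μ_min, and q is a vector of nonnegative reals, then for any index i, λ·n·(1 + 2μ_max/α) + n + 2λn·q_i − 2∑_j [μ_j q_j + μ_max (q_i − q_j)⁺] ≤ λn(1 + 2μ_max/α) + n − 2·min(1−λ, μ_min)·∑_j q_j, where μ_max is the maximum of the μ_j, λ ∈ (0,1), and α > 0. -/
theorem drift_chain_bound (n : ℕ) (hn : 1 ≤ n) (lam α : ℝ)
    (hlam : lam ∈ Set.Ioo (0 : ℝ) 1) (hα : 0 < α)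
    (μ : Fin n → ℝ) (hμpos : ∀ j, 0 < μ j) (hμsum : ∑ j, μ j = n)
    (μmin μmax : ℝ)
    (hμmin : IsLeast (Set.range μ) μmin) (hμmax : IsGreatest (Set.range μ) μmax)
    (q : Fin n → ℝ) (hq : ∀ j, 0 ≤ q j) (i : Fin n) :
    lam * n * (1 + 2 * μmax / α) + n + 2 * lam * n * q i
      - 2 * ∑ j, (μ j * q j + μmax * max (q i - q j) 0)
    ≤ lam * n * (1 + 2 * μmax / α) + n
      - 2 * min (1 - lam) μmin * ∑ j, q j := by
  set m : ℝ := min (1 - lam) μmin with hm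
  obtain ⟨hlam0, hlam1⟩ := hlam
  have hm1 : m ≤ 1 - lam := min_le_left _ _
  have hmμ : ∀ j, m ≤ μ j := fun j =>
    le_trans (min_le_right _ _) (hμmin.2 ⟨j, rfl⟩)
  have hμmin0 : 0 < μmin := by
    obtain ⟨j, hj⟩ := hμmin.1
    exact hj ▸ hμpos j
  have hm0 : 0 ≤ m := le_min (by linarith) hμmin0.le
  have hμmaxj : ∀ j, μ j ≤ μmax := fun j => hμmax.2 ⟨j, rfl⟩
  -- pointwise bound
  have key : ∀ j, lam * μ j * q i + m * q j + m * (μ j - 1) * q i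
      ≤ μ j * q j + μmax * max (q i - q j) 0 := by
    intro j
    have h1 : 0 ≤ 1 - lam - m := by linarith
    have hqi := hq i
    have hqj := hq j
    have hmj := hmμ j
    have hmaxj := hμmaxj j
    have hμj := hμpos j
    rcases le_total (q i) (q j) with h | h
    · rw [max_eq_right (by linarith)]
      nlinarith [mul_nonneg (sub_nonneg.2 hmj) (sub_nonneg.2 h),
        mul_nonneg (mul_nonneg hμj.le h1) hqi]
    · rw [max_eq_left (by linarith)]
      nlinarith [mul_nonneg (sub_nonneg.2 hmaxj) (sub_nonneg.2 h),
        mul_nonneg (mul_nonneg hμj.le h1) hqi,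
        mul_nonneg hm0 (sub_nonneg.2 h)]
  have hsum : ∑ j, (lam * μ j * q i + m * q j + m * (μ j - 1) * q i)
      ≤ ∑ j, (μ j * q j + μmax * max (q i - q j) 0) :=
    Finset.sum_le_sum (fun j _ => key j)
  have heq : ∑ j, (lam * μ j * q i + m * q j + m * (μ j - 1) * q i)
      = lam * n * q i + m * ∑ j, q j := by
    have h1 : ∑ j, (lam * μ j * q i + m * q j + m * (μ j - 1) * q i)
        = ∑ j, (μ j * ((lam + m) * q i) + (m * q j - m * q i)) :=
      Finset.sum_congr rfl (fun j _ => by ring)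
    rw [h1, Finset.sum_add_distrib, Finset.sum_sub_distrib, ← Finset.sum_mul,
      ← Finset.mul_sum, hμsum, Finset.sum_const, Finset.card_univ,
      Fintype.card_fin, nsmul_eq_mul]
    ring
  rw [heq] at hsum
  linarith
end

section
/- Let p be a probability mass function on Finset (Fin n) such that for every fixed S with |S| ∈ o(n) and every j, j′ ∉ S, the conditional probability that j belongs to the sampled set given the event {the sampled set equals S ∪ {i} for some i ∉ S} is the same for j and j′. Then for any s and any two sets S, S′ of cardinality s (with s small), p(S) = p(S′) — i.e., conditional uniformity over elements outside S implies that all sets of equal cardinality are equally likely. -/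
theorem equal_card_equal_prob (n s : ℕ) (hs : 1 ≤ s) (hsn : s ≤ n)
    (p : Finset (Fin n) → ℝ) (hp : ∀ S, 0 ≤ p S)
    (hunif : ∀ S : Finset (Fin n), S.card = s - 1 →
      0 < ∑ T ∈ Finset.univ.filter (fun T : Finset (Fin n) => T.card = s ∧ S ⊆ T), p T →
      ∀ j ∉ S, ∀ j' ∉ S, p (insert j S) = p (insert j' S)) :
    ∀ T T' : Finset (Fin n), T.card = s → T'.card = s → p T = p T' := by
  -- Key step: unconditional version of hunif
  have key : ∀ S : Finset (Fin n), S.card = s - 1 →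
      ∀ j ∉ S, ∀ j' ∉ S, p (insert j S) = p (insert j' S) := by
    intro S hS j hj j' hj'
    by_cases hpos : 0 < ∑ T ∈ Finset.univ.filter
        (fun T : Finset (Fin n) => T.card = s ∧ S ⊆ T), p T
    · exact hunif S hS hpos j hj j' hj'
    · have hzero : ∑ T ∈ Finset.univ.filter
          (fun T : Finset (Fin n) => T.card = s ∧ S ⊆ T), p T = 0 := by
        have h1 : (0:ℝ) ≤ ∑ T ∈ Finset.univ.filter
            (fun T : Finset (Fin n) => T.card = s ∧ S ⊆ T), p T :=
          Finset.sum_nonneg (fun T _ => hp T)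
        linarith [not_lt.mp hpos]
      have hall := (Finset.sum_eq_zero_iff_of_nonneg (fun T _ => hp T)).mp hzero
      have hcard : ∀ k : Fin n, k ∉ S → (insert k S).card = s := by
        intro k hk
        rw [Finset.card_insert_of_notMem hk, hS]
        omega
      have h1 : p (insert j S) = 0 := by
        apply hall
        simp only [Finset.mem_filter, Finset.mem_univ, true_and]
        exact ⟨hcard j hj, Finset.subset_insert _ _⟩
      have h2 : p (insert j' S) = 0 := by
        apply hall
        simp only [Finset.mem_filter, Finset.mem_univ, true_and]
        exact ⟨hcard j' hj', Finset.subset_insert _ _⟩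
      rw [h1, h2]
  -- Induct on |T \ T'|
  intro T T' hT hT'
  have main : ∀ m : ℕ, ∀ T T' : Finset (Fin n), T.card = s → T'.card = s →
      (T \ T').card = m → p T = p T' := by
    intro m
    induction m using Nat.strong_induction_on with
    | _ m ih =>
      intro T T' hT hT' hm
      rcases Nat.eq_zero_or_pos m with h0 | hpos
      · have : T \ T' = ∅ := by
          rw [← Finset.card_eq_zero, hm, h0]
        have hsub : T ⊆ T' := by
          intro x hx
          by_contra hx'
          exact (Finset.eq_empty_iff_forall_notMem.mp this x)
            (Finset.mem_sdiff.mpr ⟨hx, hx'⟩)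
        rw [Finset.eq_of_subset_of_card_le hsub (by omega)]
      · -- pick j ∈ T \ T', j' ∈ T' \ T
        obtain ⟨j, hj⟩ : (T \ T').Nonempty := by
          rw [← Finset.card_pos, hm]; exact hpos
        obtain ⟨j', hj'⟩ : (T' \ T).Nonempty := by
          rw [← Finset.card_pos]
          have := Finset.card_sdiff_comm (hT.trans hT'.symm)
          omega
        rw [Finset.mem_sdiff] at hj hj'
        set S := T.erase j with hSdef
        have hScard : S.card = s - 1 := by
          rw [hSdef, Finset.card_erase_of_mem hj.1, hT]
        have hjS : j ∉ S := Finset.notMem_erase _ _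
        have hj'S : j' ∉ S := fun h => hj'.2 (Finset.mem_of_mem_erase h)
        have hTeq : T = insert j S := (Finset.insert_erase hj.1).symm
        have step : p T = p (insert j' S) := by
          rw [hTeq]; exact key S hScard j hjS j' hj'S
        have hcard2 : (insert j' S).card = s := by
          rw [Finset.card_insert_of_notMem hj'S, hScard]; omega
        have hsd : ((insert j' S) \ T').card < m := by
          have hsub : (insert j' S) \ T' ⊆ (T \ T').erase j := by
            intro x hx
            rw [Finset.mem_sdiff, Finset.mem_insert] at hx
            rcases hx.1 with rfl | hxS
            · exact absurd hj'.1 hx.2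
            · rw [Finset.mem_erase, Finset.mem_sdiff]
              exact ⟨Finset.ne_of_mem_erase hxS, Finset.mem_of_mem_erase hxS, hx.2⟩
          calc ((insert j' S) \ T').card ≤ ((T \ T').erase j).card :=
              Finset.card_le_card hsub
            _ < (T \ T').card := Finset.card_erase_lt_of_mem
                (Finset.mem_sdiff.mpr hj)
            _ = m := hm
        rw [step]
        exact ih _ hsd (insert j' S) T' hcard2 hT' rfl
  exact main _ T T' hT hT' rfl
end

section
/- Let p be a probability mass function on Finset (Fin n) that is invariant under all permutations of Fin n. Then for s ≤ n, and any fixed subset N of Fin n, the conditional probability that the sampled set is contained in N, given that the sampled set has cardinality s, equals C(|N|, s)/C(n, s) (when s ≤ |N| and the conditioning event has positive probability). -/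
lemma exists_perm_image {n : ℕ} (S T : Finset (Fin n)) (h : S.card = T.card) :
    ∃ σ : Equiv.Perm (Fin n), S.image σ = T := by
  have h1 : Fintype.card {a : Fin n // a ∈ S} = Fintype.card {a : Fin n // a ∈ T} := by
    simpa [Fintype.card_coe] using h
  have h2 : Fintype.card {a : Fin n // ¬ a ∈ S} = Fintype.card {a : Fin n // ¬ a ∈ T} := by
    simp [Fintype.card_subtype_compl, Fintype.card_coe, h]
  let e := Fintype.equivOfCardEq h1
  let e' := Fintype.equivOfCardEq h2
  refine ⟨Equiv.subtypeCongr e e', ?_⟩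
  apply Finset.eq_of_subset_of_card_le
  · intro x hx
    obtain ⟨a, ha, rfl⟩ := Finset.mem_image.mp hx
    have : Equiv.subtypeCongr e e' a = e ⟨a, ha⟩ := by
      simp [Equiv.subtypeCongr, ha]
    rw [this]
    exact (e ⟨a, ha⟩).2
  · rw [Finset.card_image_of_injective _ (Equiv.injective _), h]

theorem conditional_containment_prob (n s : ℕ) (hn : 1 ≤ n)
    (p : Finset (Fin n) → ℝ) (hp : ∀ S, 0 ≤ p S)
    (hsum : ∑ S : Finset (Fin n), p S = 1)
    (hinv : ∀ σ : Equiv.Perm (Fin n), ∀ S : Finset (Fin n), p S = p (S.image σ))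
    (N : Finset (Fin n)) (hsN : s ≤ N.card)
    (hq : 0 < ∑ S ∈ Finset.univ.filter (fun S : Finset (Fin n) => S.card = s), p S) :
    (∑ S ∈ Finset.univ.filter (fun S : Finset (Fin n) => S ⊆ N ∧ S.card = s), p S)
      / (∑ S ∈ Finset.univ.filter (fun S : Finset (Fin n) => S.card = s), p S)
    = (N.card.choose s : ℝ) / (n.choose s : ℝ) := by
  have hconst : ∀ S T : Finset (Fin n), S.card = T.card → p S = p T := by
    intro S T h
    obtain ⟨σ, hσ⟩ := exists_perm_image S T h
    rw [hinv σ S, hσ]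
  obtain ⟨S₀, hS₀N, hS₀card⟩ := Finset.exists_subset_card_eq hsN
  set c := p S₀ with hc
  have hA : Finset.univ.filter (fun S : Finset (Fin n) => S ⊆ N ∧ S.card = s)
      = Finset.powersetCard s N := by
    ext S; simp [Finset.mem_powersetCard]
  have hB : Finset.univ.filter (fun S : Finset (Fin n) => S.card = s)
      = Finset.powersetCard s (Finset.univ : Finset (Fin n)) := by
    ext S; simp [Finset.mem_powersetCard]
  have hsumA : (∑ S ∈ Finset.univ.filter (fun S : Finset (Fin n) => S ⊆ N ∧ S.card = s), p S)
      = (N.card.choose s : ℝ) * c := by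
    rw [hA]
    rw [Finset.sum_congr rfl (fun S hS => hconst S S₀
      (by rw [(Finset.mem_powersetCard.mp hS).2, hS₀card]))]
    rw [Finset.sum_const, Finset.card_powersetCard, nsmul_eq_mul]
  have hsumB : (∑ S ∈ Finset.univ.filter (fun S : Finset (Fin n) => S.card = s), p S)
      = (n.choose s : ℝ) * c := by
    rw [hB]
    rw [Finset.sum_congr rfl (fun S hS => hconst S S₀
      (by rw [(Finset.mem_powersetCard.mp hS).2, hS₀card]))]
    rw [Finset.sum_const, Finset.card_powersetCard, nsmul_eq_mul]
    simp [hc]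
  rw [hsumA, hsumB]
  have hc0 : c ≠ 0 := by
    intro h0
    rw [hsumB, h0, mul_zero] at hq
    exact lt_irrefl _ hq
  have hchoose : (n.choose s : ℝ) ≠ 0 := by
    have : 0 < n.choose s := Nat.choose_pos (le_trans hsN (Finset.card_le_univ N |>.trans (by simp)))
    positivity
  field_simp
end

section
/- In the setting of permutation-invariant sampling with sample sizes at most s* where 6·s* ≤ n, and where N is a set of ⌊n/2⌋ slow servers, the probability that the sampled set is contained in N, conditioned on the sample size being at most s*, is at least (1/3)^{s*}. -/
lemma choose_bound (n : ℕ) : ∀ s : ℕ, 6 * s ≤ n → Nat.choose n s ≤ 3 ^ s * Nat.choose (n/2) s := by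
  intro s
  induction s with
  | zero => simp
  | succ k ih =>
    intro hk
    have ihk := ih (by omega)
    have h1 : Nat.choose n (k+1) * (k+1) = Nat.choose n k * (n - k) :=
      Nat.choose_succ_right_eq n k
    have h2 : Nat.choose (n/2) (k+1) * (k+1) = Nat.choose (n/2) k * (n/2 - k) :=
      Nat.choose_succ_right_eq (n/2) k
    have hsub : n - k ≤ 3 * (n/2 - k) := by omega
    have key : Nat.choose n (k+1) * (k+1) ≤ (3 ^ (k+1) * Nat.choose (n/2) (k+1)) * (k+1) := by
      calc Nat.choose n (k+1) * (k+1) = Nat.choose n k * (n - k) := h1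
        _ ≤ (3 ^ k * Nat.choose (n/2) k) * (3 * (n/2 - k)) :=
            Nat.mul_le_mul ihk hsub
        _ = 3 ^ (k+1) * (Nat.choose (n/2) k * (n/2 - k)) := by ring
        _ = 3 ^ (k+1) * (Nat.choose (n/2) (k+1) * (k+1)) := by rw [h2]
        _ = (3 ^ (k+1) * Nat.choose (n/2) (k+1)) * (k+1) := by ring
    exact Nat.le_of_mul_le_mul_right key (Nat.succ_pos k)

theorem slow_sampling_bound (n sstar : ℕ) (hn : 6 * sstar ≤ n)
    (N : Finset (Fin n)) (hN : N.card = n / 2)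
    (p : Finset (Fin n) → ℝ) (hp : ∀ S, 0 ≤ p S)
    (hsum : ∑ S : Finset (Fin n), p S = 1)
    (hsupp : ∀ S : Finset (Fin n), p S ≠ 0 → S.card ≤ sstar)
    (hinv : ∀ σ : Equiv.Perm (Fin n), ∀ S : Finset (Fin n), p S = p (S.image σ)) :
    ∑ S ∈ Finset.univ.filter (fun S : Finset (Fin n) => S ⊆ N), p S
      ≥ (1 / 3 : ℝ) ^ sstar := by
  classical
  -- p is constant on sets of equal cardinality
  have hconst : ∀ S T : Finset (Fin n), S.card = T.card → p S = p T := by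
    intro S T h
    have e : {x : Fin n // x ∈ S} ≃ {x : Fin n // x ∈ T} :=
      Fintype.equivOfCardEq (by simpa [Fintype.card_coe] using h)
    have e' : {x : Fin n // ¬ x ∈ S} ≃ {x : Fin n // ¬ x ∈ T} :=
      Fintype.equivOfCardEq (by
        rw [Fintype.card_subtype_compl, Fintype.card_subtype_compl]
        simp [Fintype.card_coe, h])
    set σ : Equiv.Perm (Fin n) := Equiv.subtypeCongr e e' with hσ
    have hmem : ∀ x ∈ S, σ x ∈ T := by
      intro x hx
      have : σ x = (e ⟨x, hx⟩ : Fin n) := by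
        simp [hσ, Equiv.subtypeCongr, hx]
      rw [this]; exact (e ⟨x, hx⟩).2
    have himg : S.image σ = T := by
      apply Finset.eq_of_subset_of_card_le
      · intro y hy
        obtain ⟨x, hx, rfl⟩ := Finset.mem_image.mp hy
        exact hmem x hx
      · rw [Finset.card_image_of_injective _ σ.injective, h]
    rw [hinv σ S, himg]
  -- key per-cardinality bound
  have key : ∀ j : ℕ,
      (1/3 : ℝ) ^ sstar * ∑ S ∈ Finset.powersetCard j (Finset.univ : Finset (Fin n)), p S
        ≤ ∑ S ∈ Finset.powersetCard j N, p S := by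
    intro j
    by_cases hz : ∀ S : Finset (Fin n), S.card = j → p S = 0
    · have h1 : ∑ S ∈ Finset.powersetCard j (Finset.univ : Finset (Fin n)), p S = 0 := by
        apply Finset.sum_eq_zero
        intro S hS
        exact hz S (Finset.mem_powersetCard.mp hS).2
      have h2 : ∑ S ∈ Finset.powersetCard j N, p S = 0 := by
        apply Finset.sum_eq_zero
        intro S hS
        exact hz S (Finset.mem_powersetCard.mp hS).2
      rw [h1, h2, mul_zero]
    · push_neg at hz
      obtain ⟨S₀, hS₀card, hS₀⟩ := hz
      have hj : j ≤ sstar := hS₀card ▸ hsupp S₀ hS₀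
      have hc : 0 ≤ p S₀ := hp S₀
      have h1 : ∑ S ∈ Finset.powersetCard j (Finset.univ : Finset (Fin n)), p S
          = (Nat.choose n j : ℝ) * p S₀ := by
        rw [Finset.sum_congr rfl (fun S hS =>
          hconst S S₀ (by rw [(Finset.mem_powersetCard.mp hS).2, hS₀card]))]
        rw [Finset.sum_const, Finset.card_powersetCard, Finset.card_univ, Fintype.card_fin,
          nsmul_eq_mul]
      have h2 : ∑ S ∈ Finset.powersetCard j N, p S = (Nat.choose (n/2) j : ℝ) * p S₀ := by
        rw [Finset.sum_congr rfl (fun S hS =>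
          hconst S S₀ (by rw [(Finset.mem_powersetCard.mp hS).2, hS₀card]))]
        rw [Finset.sum_const, Finset.card_powersetCard, hN, nsmul_eq_mul]
      rw [h1, h2]
      have hnat : Nat.choose n j ≤ 3 ^ sstar * Nat.choose (n/2) j := by
        calc Nat.choose n j ≤ 3 ^ j * Nat.choose (n/2) j := choose_bound n j (by omega)
          _ ≤ 3 ^ sstar * Nat.choose (n/2) j :=
              Nat.mul_le_mul_right _ (Nat.pow_le_pow_right (by norm_num) hj)
      have hreal : (Nat.choose n j : ℝ) ≤ 3 ^ sstar * (Nat.choose (n/2) j : ℝ) := by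
        exact_mod_cast hnat
      have h3 : (1/3 : ℝ) ^ sstar * (Nat.choose n j : ℝ) ≤ (Nat.choose (n/2) j : ℝ) := by
        rw [one_div, inv_pow, inv_mul_le_iff₀ (by positivity)]
        exact hreal
      calc (1/3 : ℝ) ^ sstar * ((Nat.choose n j : ℝ) * p S₀)
          = ((1/3 : ℝ) ^ sstar * (Nat.choose n j : ℝ)) * p S₀ := by ring
        _ ≤ (Nat.choose (n/2) j : ℝ) * p S₀ := mul_le_mul_of_nonneg_right h3 hc
      -- done
  -- decompose sums by cardinality
  have hcardle : ∀ S : Finset (Fin n), S.card ≤ n := fun S =>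
    (Finset.card_le_univ S).trans (by simp)
  have hdecompU : ∑ S : Finset (Fin n), p S
      = ∑ j ∈ Finset.range (n+1), ∑ S ∈ Finset.powersetCard j (Finset.univ : Finset (Fin n)), p S := by
    rw [← Finset.sum_fiberwise_of_maps_to
      (fun S _ => Finset.mem_range.mpr (Nat.lt_succ_of_le (hcardle S))) p]
    refine Finset.sum_congr rfl (fun j _ => Finset.sum_congr ?_ (fun _ _ => rfl))
    ext S; simp [Finset.mem_powersetCard_univ]
  have hdecompN : ∑ S ∈ Finset.univ.filter (fun S : Finset (Fin n) => S ⊆ N), p S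
      = ∑ j ∈ Finset.range (n+1), ∑ S ∈ Finset.powersetCard j N, p S := by
    rw [← Finset.sum_fiberwise_of_maps_to
      (fun S (_ : S ∈ Finset.univ.filter (fun S : Finset (Fin n) => S ⊆ N)) =>
        Finset.mem_range.mpr (Nat.lt_succ_of_le (hcardle S))) p]
    refine Finset.sum_congr rfl (fun j _ => Finset.sum_congr ?_ (fun _ _ => rfl))
    ext S; simp [Finset.mem_powersetCard, and_comm]
  calc ∑ S ∈ Finset.univ.filter (fun S : Finset (Fin n) => S ⊆ N), p S
      = ∑ j ∈ Finset.range (n+1), ∑ S ∈ Finset.powersetCard j N, p S := hdecompN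
    _ ≥ ∑ j ∈ Finset.range (n+1),
          (1/3 : ℝ) ^ sstar * ∑ S ∈ Finset.powersetCard j (Finset.univ : Finset (Fin n)), p S :=
        Finset.sum_le_sum (fun j _ => key j)
    _ = (1/3 : ℝ) ^ sstar * ∑ S : Finset (Fin n), p S := by
        rw [← Finset.mul_sum, ← hdecompU]
    _ = (1/3 : ℝ) ^ sstar := by rw [hsum, mul_one]
end

section
/- Algebraic inequality used in the drift proof: for nonnegative reals q_1,…,q_n, positive reals μ_1,…,μ_n with ∑ μ_j = n and min μ_j = μ_min, and any index i and λ ∈ (0,1): 2λn q_i − 2∑_j μ_j max(q_i, q_j) ≤ −2 min(1−λ, μ_min)·∑_j q_j. -/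
theorem drift_algebraic_bound (n : ℕ) (hn : 1 ≤ n) (lam : ℝ)
    (hlam : lam ∈ Set.Ioo (0 : ℝ) 1)
    (μ : Fin n → ℝ) (hμpos : ∀ j, 0 < μ j) (hμsum : ∑ j, μ j = n)
    (μmin : ℝ) (hμmin : IsLeast (Set.range μ) μmin)
    (q : Fin n → ℝ) (hq : ∀ j, 0 ≤ q j) (i : Fin n) :
    2 * lam * n * q i - 2 * ∑ j, μ j * max (q i) (q j)
      ≤ -2 * min (1 - lam) μmin * ∑ j, q j := by
  obtain ⟨hl0, hl1⟩ := hlam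
  have hμle : ∀ j, μmin ≤ μ j := fun j => hμmin.2 ⟨j, rfl⟩
  have hμmin_pos : 0 < μmin := by
    obtain ⟨j, hj⟩ := hμmin.1
    exact hj ▸ hμpos j
  set P : Fin n → ℝ := fun j => max (q j - q i) 0 with hPdef
  have hPnn : ∀ j, 0 ≤ P j := fun j => le_max_right _ _
  have hmax : ∀ j, max (q i) (q j) = q i + P j := by
    intro j
    rcases le_total (q i) (q j) with h | h
    · rw [max_eq_right h]; simp [hPdef, sub_nonneg.2 h]
    · rw [max_eq_left h]; simp [hPdef, max_eq_right (sub_nonpos.2 h)]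
  have h1 : ∑ j, μ j * max (q i) (q j) = (n : ℝ) * q i + ∑ j, μ j * P j := by
    simp_rw [hmax, mul_add, Finset.sum_add_distrib, ← Finset.sum_mul, hμsum]
  have h2 : μmin * ∑ j, P j ≤ ∑ j, μ j * P j := by
    rw [Finset.mul_sum]
    exact Finset.sum_le_sum fun j _ =>
      mul_le_mul_of_nonneg_right (hμle j) (hPnn j)
  set m : ℝ := min (1 - lam) μmin with hm
  have hm1 : m ≤ 1 - lam := min_le_left _ _
  have hm2 : m ≤ μmin := min_le_right _ _
  have hm0 : 0 ≤ m := le_min (by linarith) hμmin_pos.le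
  have h3 : ∀ j, m * q j ≤ (1 - lam) * q i + μmin * P j := by
    intro j
    have hqle : q j ≤ q i + P j := by
      have : q j - q i ≤ P j := le_max_left _ _
      linarith
    nlinarith [hq i, hPnn j, hq j]
  have h4 : m * ∑ j, q j ≤ (1 - lam) * (n * q i) + μmin * ∑ j, P j := by
    have := Finset.sum_le_sum (fun j (_ : j ∈ Finset.univ) => h3 j)
    rw [← Finset.mul_sum] at this
    simp only [Finset.sum_add_distrib, Finset.sum_const, Finset.card_univ,
      Fintype.card_fin, nsmul_eq_mul, ← Finset.mul_sum] at this
    linarith [this]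
  rw [h1]
  nlinarith [hq i, Finset.sum_nonneg fun j (_ : j ∈ Finset.univ) => hPnn j]
end
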